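/- Give Z^n the Z[x,x^{-1}]-module structure where x acts by the cyclic shift x·(a_1,…,a_n) = (a_n, a_1,…,a_{n−1}), with the componentwise partial order. Let I, J be countable sets and n_i, m_j positive integers (i ∈ I, j ∈ J). If f : ⊕_{i∈I} Z^{n_i} → ⊕_{j∈J} Z^{m_j} is an order-preserving Z[x,x^{-1}]-module isomorphism with order-preserving inverse, then there is a bijection π : I → J such that n_i = m_{π(i)} and f maps the summand Z^{n_i} onto the summand Z^{m_{π(i)}} for every i ∈ I. -/

import Mathlib

/-- The action of `x` on `⊕_{i∈I} ℤ^{n_i}`: on each summand `ℤ^{n_i}` (realized as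
`ZMod (n i) → ℤ`), `x` acts by the cyclic shift `x⬝(a₁,…,a_n) = (a_n, a₁, …, a_{n-1})`. -/
def cyclicShift {I : Type*} (n : I → ℕ) :
    (Π₀ i : I, (ZMod (n i) → ℤ)) → Π₀ i : I, (ZMod (n i) → ℤ) :=
  DFinsupp.mapRange (fun _ v k => v (k - 1)) (fun _ => rfl)

/-- basis element e_{i,k} -/
def basE {I : Type*} [DecidableEq I] (n : I → ℕ) (i : I) (k : ZMod (n i)) :
    Π₀ i : I, (ZMod (n i) → ℤ) :=
  DFinsupp.single i (Pi.single k 1)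

section basic
variable {I : Type*} [DecidableEq I] (n : I → ℕ)

lemma basE_apply_same (i : I) (k k' : ZMod (n i)) :
    basE n i k i k' = if k' = k then 1 else 0 := by
  simp [basE, DFinsupp.single_eq_same, Pi.single_apply]

lemma basE_apply_ne {i i' : I} (h : i' ≠ i) (k : ZMod (n i)) :
    basE n i k i' = 0 := by
  simp [basE, DFinsupp.single_eq_of_ne h]

lemma basE_ne_zero (i : I) (k : ZMod (n i)) : basE n i k ≠ 0 := by
  intro h
  have := congrFun (congrArg (fun g : Π₀ i : I, (ZMod (n i) → ℤ) => g i) h) k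
  simp [basE_apply_same] at this

lemma basE_inj_fst {i i' : I} {k : ZMod (n i)} {k' : ZMod (n i')}
    (h : basE n i k = basE n i' k') : i = i' := by
  by_contra hne
  have : basE n i k i k = basE n i' k' i k := by rw [h]
  rw [basE_apply_same, basE_apply_ne n hne] at this
  simp at this

lemma basE_inj_snd {i : I} {k k' : ZMod (n i)}
    (h : basE n i k = basE n i k') : k = k' := by
  have : basE n i k i k = basE n i k' i k := by rw [h]
  rw [basE_apply_same, basE_apply_same] at this
  by_contra hne
  rw [if_pos rfl, if_neg hne] at this
  exact one_ne_zero this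

lemma cyclicShift_basE (i : I) (k : ZMod (n i)) :
    cyclicShift n (basE n i k) = basE n i (k + 1) := by
  unfold cyclicShift basE
  rw [DFinsupp.mapRange_single]
  congr 1
  funext k'
  simp [Pi.single_apply, sub_eq_iff_eq_add]

lemma basE_nonneg (i : I) (k : ZMod (n i)) : ∀ p q, (0:ℤ) ≤ basE n i k p q := by
  intro p q
  by_cases hp : p = i
  · subst hp; rw [basE_apply_same]; split <;> norm_num
  · rw [basE_apply_ne n hp]; exact le_refl _

lemma exists_ne_zero {g : Π₀ i : I, (ZMod (n i) → ℤ)} (hg : g ≠ 0) :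
    ∃ i k, g i k ≠ 0 := by
  by_contra h
  push_neg at h
  exact hg (DFinsupp.ext fun i => funext fun k => h i k)

lemma basE_atom {i : I} {k : ZMod (n i)} {b : Π₀ i : I, (ZMod (n i) → ℤ)}
    (hb : ∀ p q, 0 ≤ b p q) (hb2 : ∀ p q, b p q ≤ basE n i k p q) :
    b = 0 ∨ b = basE n i k := by
  by_cases hbk : b i k = 0
  · left
    refine DFinsupp.ext fun p => funext fun q => ?_
    by_cases hp : p = i
    · subst hp
      by_cases hq : q = k
      · subst hq; exact hbk
      · have h2 := hb2 p q
        rw [basE_apply_same, if_neg hq] at h2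
        exact le_antisymm h2 (hb p q)
    · have h2 := hb2 p q
      rw [basE_apply_ne n hp] at h2
      exact le_antisymm h2 (hb p q)
  · right
    have h1 : b i k = 1 := by
      have h2 := hb2 i k
      rw [basE_apply_same, if_pos rfl] at h2
      have := hb i k
      omega
    refine DFinsupp.ext fun p => funext fun q => ?_
    by_cases hp : p = i
    · subst hp
      rw [basE_apply_same]
      by_cases hq : q = k
      · subst hq; rw [if_pos rfl]; exact h1
      · rw [if_neg hq]
        have h2 := hb2 p q
        rw [basE_apply_same, if_neg hq] at h2
        exact le_antisymm h2 (hb p q)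
    · rw [basE_apply_ne n hp]
      have h2 := hb2 p q
      rw [basE_apply_ne n hp] at h2
      exact (le_antisymm h2 (hb p q)) ▸ rfl

lemma decomp (i : I) [NeZero (n i)] (g : Π₀ i : I, (ZMod (n i) → ℤ))
    (hg : ∀ i' ≠ i, g i' = 0) :
    g = ∑ k : ZMod (n i), g i k • basE n i k := by
  refine DFinsupp.ext fun p => ?_
  rw [DFinsupp.finset_sum_apply]
  by_cases hp : p = i
  · subst hp
    funext q
    rw [Finset.sum_apply]
    simp only [DFinsupp.smul_apply, Pi.smul_apply, basE_apply_same, smul_eq_mul,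
      mul_ite, mul_one, mul_zero]
    rw [Finset.sum_ite_eq Finset.univ q (fun k => g p k)]
    simp
  · rw [hg p hp]
    symm
    apply Finset.sum_eq_zero
    intro k _
    rw [DFinsupp.smul_apply, basE_apply_ne n hp, smul_zero]

end basic

section map
variable {I J : Type*} [DecidableEq I] [DecidableEq J] {n : I → ℕ} {m : J → ℕ}
  (f : (Π₀ i : I, (ZMod (n i) → ℤ)) ≃+ (Π₀ j : J, (ZMod (m j) → ℤ)))

lemma exists_map
    (hford : ∀ g, (∀ i k, 0 ≤ g i k) → ∀ j k, 0 ≤ f g j k)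
    (hfinv : ∀ h, (∀ j k, 0 ≤ h j k) → ∀ i k, 0 ≤ f.symm h i k)
    (i : I) (k : ZMod (n i)) : ∃ j l, f (basE n i k) = basE m j l := by
  have hposf : ∀ j l, 0 ≤ f (basE n i k) j l := hford _ (basE_nonneg n i k)
  have hfne : f (basE n i k) ≠ 0 := by
    intro h
    exact basE_ne_zero n i k (f.injective (by rw [h, map_zero]))
  obtain ⟨j, l, hjl⟩ := exists_ne_zero m hfne
  have hge1 : 1 ≤ f (basE n i k) j l := by have := hposf j l; omega
  set b' := f.symm (basE m j l) with hb'def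
  have hb : ∀ p q, 0 ≤ b' p q := hfinv _ (basE_nonneg m j l)
  have hdiffpos : ∀ p q, 0 ≤ (f (basE n i k) - basE m j l) p q := by
    intro p q
    rw [DFinsupp.sub_apply, Pi.sub_apply]
    by_cases hp : p = j
    · subst hp
      rw [basE_apply_same]
      by_cases hq : q = l
      · subst hq; rw [if_pos rfl]; omega
      · rw [if_neg hq]; have := hposf p q; omega
    · rw [basE_apply_ne m hp]
      have := hposf p q; simpa using this
  have hsub : f.symm (f (basE n i k) - basE m j l) = basE n i k - b' := by
    rw [map_sub, f.symm_apply_apply]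
  have hb2 : ∀ p q, b' p q ≤ basE n i k p q := by
    intro p q
    have := hfinv _ hdiffpos p q
    rw [hsub, DFinsupp.sub_apply, Pi.sub_apply] at this
    omega
  rcases basE_atom n hb hb2 with h0 | hE
  · exfalso
    have : basE m j l = 0 := by
      have := congrArg f h0
      rwa [f.apply_symm_apply, map_zero] at this
    exact basE_ne_zero m j l this
  · refine ⟨j, l, ?_⟩
    have := congrArg f hE
    rw [f.apply_symm_apply] at this
    exact this.symm

lemma iterate_map (hfx : ∀ g, f (cyclicShift n g) = cyclicShift m (f g))
    {i : I} {j : J} {k : ZMod (n i)} {l : ZMod (m j)}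
    (h : f (basE n i k) = basE m j l) :
    ∀ t : ℕ, f (basE n i (k + t)) = basE m j (l + t) := by
  intro t; induction t with
  | zero => simpa using h
  | succ t ih =>
    have h1 : ((t + 1 : ℕ) : ZMod (n i)) = (t : ZMod (n i)) + 1 := by push_cast; ring
    have h2 : ((t + 1 : ℕ) : ZMod (m j)) = (t : ZMod (m j)) + 1 := by push_cast; ring
    rw [h1, h2, ← add_assoc, ← add_assoc, ← cyclicShift_basE, hfx _, ih, cyclicShift_basE]

lemma map_all (hfx : ∀ g, f (cyclicShift n g) = cyclicShift m (f g))
    (i : I) [NeZero (n i)] {j : J} {l : ZMod (m j)}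
    (h0 : f (basE n i 0) = basE m j l) :
    ∀ k : ZMod (n i), f (basE n i k) = basE m j (l + k.val) := by
  intro k
  have := iterate_map f hfx h0 k.val
  rwa [zero_add, ZMod.natCast_rightInverse k] at this

lemma support_map {i : I} {j : J} [NeZero (n i)]
    (hall : ∀ k, ∃ l, f (basE n i k) = basE m j l)
    (g : Π₀ i : I, (ZMod (n i) → ℤ)) (hg : ∀ i' ≠ i, g i' = 0) :
    ∀ j' ≠ j, f g j' = 0 := by
  intro j' hj'
  rw [decomp n i g hg, map_sum, DFinsupp.finset_sum_apply]
  apply Finset.sum_eq_zero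
  intro k _
  obtain ⟨l, hl⟩ := hall k
  rw [map_zsmul, hl, DFinsupp.smul_apply, basE_apply_ne m hj', smul_zero]

end map

/-- Give `ℤ^n` the `ℤ[x,x⁻¹]`-module structure in which `x` acts by the
cyclic shift, with the componentwise partial order.  Let `I, J` be countable sets and
`n_i, m_j` positive integers.  If `f : ⊕_{i∈I} ℤ^{n_i} → ⊕_{j∈J} ℤ^{m_j}` is an
order-preserving `ℤ[x,x⁻¹]`-module isomorphism (an additive bijection commuting with the
`x`-action) with order-preserving inverse, then there is a bijection `π : I → J` with
`n_i = m_{π(i)}` such that `f` maps the summand `ℤ^{n_i}` onto the summand `ℤ^{m_{π(i)}}`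
for every `i ∈ I`. -/
theorem stmt_18 {I J : Type*} [Countable I] [Countable J]
    [DecidableEq I] [DecidableEq J]
    (n : I → ℕ) (m : J → ℕ) (hn : ∀ i, 0 < n i) (hm : ∀ j, 0 < m j)
    (f : (Π₀ i : I, (ZMod (n i) → ℤ)) ≃+ (Π₀ j : J, (ZMod (m j) → ℤ)))
    (hfx : ∀ g, f (cyclicShift n g) = cyclicShift m (f g))
    (hford : ∀ g, (∀ i k, 0 ≤ g i k) → ∀ j k, 0 ≤ f g j k)
    (hfinv : ∀ h, (∀ j k, 0 ≤ h j k) → ∀ i k, 0 ≤ f.symm h i k) :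
    ∃ π : I → J, Function.Bijective π ∧ (∀ i, n i = m (π i)) ∧
      ∀ i, ⇑f '' {g | ∀ i', i' ≠ i → g i' = 0} = {h | ∀ j', j' ≠ π i → h j' = 0} := by
  have instN : ∀ i, NeZero (n i) := fun i => ⟨(hn i).ne'⟩
  have instM : ∀ j, NeZero (m j) := fun j => ⟨(hm j).ne'⟩
  have hfx' : ∀ h, f.symm (cyclicShift m h) = cyclicShift n (f.symm h) := by
    intro h
    apply f.injective
    rw [f.apply_symm_apply, hfx, f.apply_symm_apply]
  have hford' : ∀ h, (∀ j k, 0 ≤ h j k) → ∀ i k, 0 ≤ f.symm h i k := hfinv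
  have hfinv' : ∀ g, (∀ i k, 0 ≤ g i k) → ∀ j k, 0 ≤ f.symm.symm g j k := by
    intro g hg j k
    rw [AddEquiv.symm_symm]
    exact hford g hg j k
  have h0 : ∀ i, ∃ j l, f (basE n i 0) = basE m j l :=
    fun i => exists_map f hford hfinv i 0
  choose π lJ hπ using h0
  have h0' : ∀ j, ∃ i k, f.symm (basE m j 0) = basE n i k :=
    fun j => exists_map f.symm hford' hfinv' j 0
  choose ρ lI hρ using h0'
  -- all atoms of summand i go to summand π i
  have hallI : ∀ i k, f (basE n i k) = basE m (π i) (lJ i + k.val) := by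
    intro i
    haveI := instN i
    exact map_all f hfx i (hπ i)
  have hallJ : ∀ j l, f.symm (basE m j l) = basE n (ρ j) (lI j + l.val) := by
    intro j
    haveI := instM j
    exact map_all f.symm hfx' j (hρ j)
  have hinv : ∀ i, f.symm (basE m (π i) (lJ i)) = basE n i 0 := by
    intro i
    rw [← hπ i, f.symm_apply_apply]
  have hfwd : ∀ j, f (basE n (ρ j) (lI j)) = basE m j 0 := by
    intro j
    rw [← hρ j, f.apply_symm_apply]
  have hleft : ∀ i, ρ (π i) = i := by
    intro i
    exact basE_inj_fst n ((hallJ (π i) (lJ i)).symm.trans (hinv i))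
  have hright : ∀ j, π (ρ j) = j := by
    intro j
    exact basE_inj_fst m ((hallI (ρ j) (lI j)).symm.trans (hfwd j))
  refine ⟨π, Function.bijective_iff_has_inverse.mpr ⟨ρ, hleft, hright⟩, ?_, ?_⟩
  · -- n i = m (π i)
    intro i
    haveI := instN i
    haveI := instM (π i)
    have h1 := iterate_map f hfx (hπ i) (n i)
    rw [ZMod.natCast_self, add_zero, hπ i] at h1
    have hdvd1 : m (π i) ∣ n i := by
      have h2 : (n i : ZMod (m (π i))) = 0 :=
        left_eq_add.mp (basE_inj_snd m h1)
      exact (ZMod.natCast_eq_zero_iff _ _).mp h2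
    have h4 := iterate_map f.symm hfx' (hinv i) (m (π i))
    rw [ZMod.natCast_self, add_zero, hinv i, zero_add] at h4
    have hdvd2 : n i ∣ m (π i) := by
      have h5 : (m (π i) : ZMod (n i)) = 0 := (basE_inj_snd n h4).symm
      exact (ZMod.natCast_eq_zero_iff _ _).mp h5
    exact Nat.dvd_antisymm hdvd2 hdvd1
  · -- image of summand i is summand π i
    intro i
    haveI := instN i
    haveI := instM (π i)
    have key : ∀ l, ∃ k, f.symm (basE m (π i) l) = basE n i k := by
      intro l
      have h1 := iterate_map f.symm hfx' (hinv i) (l - lJ i).val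
      rw [ZMod.natCast_rightInverse (l - lJ i)] at h1
      have h2 : lJ i + (l - lJ i) = l := by ring
      rw [h2] at h1
      exact ⟨_, h1⟩
    ext h
    constructor
    · rintro ⟨g, hg, rfl⟩
      intro j' hj'
      exact support_map f (fun k => ⟨_, hallI i k⟩) g (fun i' hi' => hg i' hi') j' hj'
    · intro hh
      refine ⟨f.symm h, ?_, f.apply_symm_apply h⟩
      intro i' hi'
      exact support_map f.symm key h (fun j' hj' => hh j' hj') i' hi'
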